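/- arXiv:1805.01873 — 5 statements merged into one kernel-verified Lean document; each statement's English description precedes it below -/
import Mathlib

section
/- Let B = ℚ[z₁,…,zₙ,c₁,…,c_r], let K = ℚ(c₁,…,c_r) be the field of fractions of ℚ[c₁,…,c_r], let A = K[z₁,…,zₙ], and let φ : B → A be the canonical injective ring homomorphism (sending each z_i to z_i and each c_j to the corresponding element of K). Let ≻₁ be a monomial order on the z-monomials, ≻₂ a monomial order on the c-monomials, and ≻ the block ordering (≻₁,≻₂) on the monomials of B. Let v₁,…,v_l ∈ B, let U' ⊆ B be the ideal generated by v₁,…,v_l, and let U ⊆ A be the ideal generated by φ(v₁),…,φ(v_l). If G is a Gröbner basis of U' with respect to ≻, then φ(G) = {φ(g) : g ∈ G} is a Gröbner basis of U with respect to ≻₁; that is, for every nonzero f ∈ U there exists g ∈ G such that the ≻₁-leading monomial of φ(g) divides the ≻₁-leading monomial of f. -/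
open MvPolynomial

/-- The "z-part" of a monomial of `F[z₁,…,zₙ,c₁,…,c_r]`. -/
noncomputable def zpart {n r : ℕ} (μ : (Fin n ⊕ Fin r) →₀ ℕ) : Fin n →₀ ℕ :=
  Finsupp.equivFunOnFinite.symm fun i => μ (Sum.inl i)

/-- The "c-part" of a monomial of `F[z₁,…,zₙ,c₁,…,c_r]`. -/
noncomputable def cpart {n r : ℕ} (μ : (Fin n ⊕ Fin r) →₀ ℕ) : Fin r →₀ ℕ :=
  Finsupp.equivFunOnFinite.symm fun j => μ (Sum.inr j)

/-- `α` is the leading monomial of `f` with respect to the (non-strict) order `le`: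
it occurs in `f` and dominates every monomial of `f`. -/
def IsLeadMon {σ F : Type*} [CommSemiring F]
    (le : (σ →₀ ℕ) → (σ →₀ ℕ) → Prop)
    (f : MvPolynomial σ F) (α : σ →₀ ℕ) : Prop :=
  α ∈ f.support ∧ ∀ β ∈ f.support, le β α

/-- The canonical ring homomorphism
`ℚ[z₁,…,zₙ,c₁,…,c_r] → ℚ(c₁,…,c_r)[z₁,…,zₙ]` sending each `zᵢ` to `zᵢ`
and each `cⱼ` to the corresponding constant of the fraction field. -/
noncomputable def toParamRing (n r : ℕ) :
    MvPolynomial (Fin n ⊕ Fin r) ℚ →+*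
      MvPolynomial (Fin n) (FractionRing (MvPolynomial (Fin r) ℚ)) :=
  eval₂Hom
    ((C : FractionRing (MvPolynomial (Fin r) ℚ) →+* _).comp
      ((algebraMap (MvPolynomial (Fin r) ℚ)
          (FractionRing (MvPolynomial (Fin r) ℚ))).comp (C : ℚ →+* _)))
    (Sum.elim (fun i => X i)
      (fun j => C (algebraMap (MvPolynomial (Fin r) ℚ)
        (FractionRing (MvPolynomial (Fin r) ℚ)) (X j))))

@[simp] lemma zpart_apply {n r : ℕ} (μ : (Fin n ⊕ Fin r) →₀ ℕ) (i : Fin n) :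
    zpart μ i = μ (Sum.inl i) := rfl
@[simp] lemma cpart_apply {n r : ℕ} (μ : (Fin n ⊕ Fin r) →₀ ℕ) (j : Fin r) :
    cpart μ j = μ (Sum.inr j) := rfl
@[simp] lemma zpart_zero {n r : ℕ} : zpart (n := n) (r := r) 0 = 0 := by ext i; simp
@[simp] lemma cpart_zero {n r : ℕ} : cpart (n := n) (r := r) 0 = 0 := by ext j; simp
@[simp] lemma zpart_add {n r : ℕ} (μ ν : (Fin n ⊕ Fin r) →₀ ℕ) :
    zpart (μ + ν) = zpart μ + zpart ν := by ext i; simp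
@[simp] lemma cpart_add {n r : ℕ} (μ ν : (Fin n ⊕ Fin r) →₀ ℕ) :
    cpart (μ + ν) = cpart μ + cpart ν := by ext j; simp
@[simp] lemma zpart_single_inl {n r : ℕ} (i : Fin n) (k : ℕ) :
    zpart (r := r) (Finsupp.single (Sum.inl i) k) = Finsupp.single i k := by
  ext i'; by_cases h : i = i' <;> simp [h, Finsupp.single_apply, Sum.inl.injEq]
@[simp] lemma zpart_single_inr {n r : ℕ} (j : Fin r) (k : ℕ) :
    zpart (n := n) (Finsupp.single (Sum.inr j) k) = 0 := by
  ext i'; simp [Finsupp.single_apply]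
@[simp] lemma cpart_single_inl {n r : ℕ} (i : Fin n) (k : ℕ) :
    cpart (r := r) (Finsupp.single (Sum.inl i) k) = 0 := by
  ext j'; simp [Finsupp.single_apply]
@[simp] lemma cpart_single_inr {n r : ℕ} (j : Fin r) (k : ℕ) :
    cpart (n := n) (Finsupp.single (Sum.inr j) k) = Finsupp.single j k := by
  ext j'; by_cases h : j = j' <;> simp [h, Finsupp.single_apply, Sum.inr.injEq]
@[simp] lemma zpart_sumElim {n r : ℕ} (α : Fin n →₀ ℕ) (γ : Fin r →₀ ℕ) :
    zpart (α.sumElim γ) = α := by ext i; simp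
@[simp] lemma cpart_sumElim {n r : ℕ} (α : Fin n →₀ ℕ) (γ : Fin r →₀ ℕ) :
    cpart (α.sumElim γ) = γ := by ext j; simp
lemma sumElim_zpart_cpart {n r : ℕ} (μ : (Fin n ⊕ Fin r) →₀ ℕ) :
    (zpart μ).sumElim (cpart μ) = μ := by ext x; cases x <;> simp

lemma sumToIter_monomial {n r : ℕ} (ν : (Fin n ⊕ Fin r) →₀ ℕ) (a : ℚ) :
    sumToIter ℚ (Fin n) (Fin r) (monomial ν a)
      = monomial (zpart ν) (monomial (cpart ν) a) := by
  induction ν using Finsupp.induction with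
  | zero => simp [monomial_zero', sumToIter_C]
  | single_add x k ν hx hk ih =>
      rw [monomial_single_add, map_mul, map_pow, ih]
      cases x with
      | inl i =>
          rw [sumToIter_Xl, zpart_add, zpart_single_inl, cpart_add, cpart_single_inl,
            zero_add, ← monomial_single_add]
      | inr j =>
          rw [sumToIter_Xr, ← map_pow, C_mul_monomial, zpart_add, zpart_single_inr,
            zero_add, cpart_add, cpart_single_inr, ← monomial_single_add]

lemma coeff_coeff_sumToIter {n r : ℕ} (h : MvPolynomial (Fin n ⊕ Fin r) ℚ)
    (α : Fin n →₀ ℕ) (γ : Fin r →₀ ℕ) :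
    coeff γ (coeff α (sumToIter ℚ (Fin n) (Fin r) h)) = coeff (α.sumElim γ) h := by
  induction h using MvPolynomial.induction_on' with
  | monomial ν a =>
      have key : (ν = α.sumElim γ) ↔ (zpart ν = α ∧ cpart ν = γ) := by
        constructor
        · intro h; subst h; simp
        · rintro ⟨h1, h2⟩; rw [← h1, ← h2, sumElim_zpart_cpart]
      rw [sumToIter_monomial]
      simp only [coeff_monomial, key, ite_and, apply_ite (coeff γ), coeff_zero,
        coeff_monomial]
  | add p q hp hq => simp [map_add, coeff_add, hp, hq]


lemma toParamRing_eq (n r : ℕ) :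
    toParamRing n r =
      (MvPolynomial.map (algebraMap (MvPolynomial (Fin r) ℚ)
          (FractionRing (MvPolynomial (Fin r) ℚ)))).comp
        (sumToIter ℚ (Fin n) (Fin r)) := by
  apply MvPolynomial.ringHom_ext
  · intro a
    simp [toParamRing, sumToIter_C]
  · rintro (i | j) <;> simp [toParamRing, sumToIter_Xl, sumToIter_Xr]

lemma coeff_toParamRing {n r : ℕ} (h : MvPolynomial (Fin n ⊕ Fin r) ℚ)
    (α : Fin n →₀ ℕ) :
    coeff α (toParamRing n r h) =
      algebraMap (MvPolynomial (Fin r) ℚ) (FractionRing (MvPolynomial (Fin r) ℚ))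
        (coeff α (sumToIter ℚ (Fin n) (Fin r) h)) := by
  rw [toParamRing_eq]; simp [coeff_map]

lemma coeff_toParamRing_ne_zero_iff {n r : ℕ} (h : MvPolynomial (Fin n ⊕ Fin r) ℚ)
    (α : Fin n →₀ ℕ) :
    coeff α (toParamRing n r h) ≠ 0 ↔ coeff α (sumToIter ℚ (Fin n) (Fin r) h) ≠ 0 := by
  rw [coeff_toParamRing]
  constructor
  · intro hne h0; exact hne (by rw [h0, map_zero])
  · intro hne h0
    exact hne (IsFractionRing.injective (MvPolynomial (Fin r) ℚ)
      (FractionRing (MvPolynomial (Fin r) ℚ)) (by rw [h0, map_zero]))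


lemma lead_transfer {n r : ℕ}
    (le1 : (Fin n →₀ ℕ) → (Fin n →₀ ℕ) → Prop)
    (le2 : (Fin r →₀ ℕ) → (Fin r →₀ ℕ) → Prop)
    (h1refl : ∀ α, le1 α α)
    (leB : ((Fin n ⊕ Fin r) →₀ ℕ) → ((Fin n ⊕ Fin r) →₀ ℕ) → Prop)
    (hleB : ∀ μ ν, leB μ ν ↔
      ((le1 (zpart μ) (zpart ν) ∧ zpart μ ≠ zpart ν) ∨
        (zpart μ = zpart ν ∧ le2 (cpart μ) (cpart ν))))
    (h : MvPolynomial (Fin n ⊕ Fin r) ℚ) (μ : (Fin n ⊕ Fin r) →₀ ℕ)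
    (hμ : IsLeadMon leB h μ) : IsLeadMon le1 (toParamRing n r h) (zpart μ) := by
  obtain ⟨hmem, hdom⟩ := hμ
  rw [mem_support_iff] at hmem
  constructor
  · rw [mem_support_iff, coeff_toParamRing_ne_zero_iff]
    intro h0
    apply hmem
    rw [← sumElim_zpart_cpart μ, ← coeff_coeff_sumToIter, h0, coeff_zero]
  · intro β hβ
    rw [mem_support_iff, coeff_toParamRing_ne_zero_iff, MvPolynomial.ne_zero_iff] at hβ
    obtain ⟨γ, hγ⟩ := hβ
    rw [coeff_coeff_sumToIter] at hγ
    have hνmem : β.sumElim γ ∈ h.support := mem_support_iff.mpr hγ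
    have := hdom _ hνmem
    rw [hleB] at this
    rcases this with ⟨hle, _⟩ | ⟨heq, _⟩
    · simpa using hle
    · rw [zpart_sumElim] at heq
      rw [heq]; exact h1refl _

lemma toParamRing_rename {n r : ℕ} (d : MvPolynomial (Fin r) ℚ) :
    toParamRing n r (rename Sum.inr d) =
      C (algebraMap (MvPolynomial (Fin r) ℚ)
        (FractionRing (MvPolynomial (Fin r) ℚ)) d) := by
  have : (toParamRing n r).comp (rename (Sum.inr : Fin r → Fin n ⊕ Fin r)).toRingHom =
      (C : FractionRing (MvPolynomial (Fin r) ℚ) →+* _).comp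
        (algebraMap (MvPolynomial (Fin r) ℚ) (FractionRing (MvPolynomial (Fin r) ℚ))) := by
    apply MvPolynomial.ringHom_ext
    · intro a
      simp [toParamRing]
    · intro j
      simp [toParamRing]
  exact congrFun (congrArg (fun f => f.toFun) this) d

lemma clearT {n r : ℕ}
    (q : MvPolynomial (Fin n) (FractionRing (MvPolynomial (Fin r) ℚ))) :
    ∃ d : MvPolynomial (Fin r) ℚ, d ≠ 0 ∧ ∃ p : MvPolynomial (Fin n ⊕ Fin r) ℚ,
      C (algebraMap (MvPolynomial (Fin r) ℚ)
        (FractionRing (MvPolynomial (Fin r) ℚ)) d) * q = toParamRing n r p := by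
  induction q using MvPolynomial.induction_on with
  | C a =>
      obtain ⟨⟨x, s⟩, hs⟩ := IsLocalization.surj
        (nonZeroDivisors (MvPolynomial (Fin r) ℚ)) a
      refine ⟨s, nonZeroDivisors.ne_zero s.2, rename Sum.inr x, ?_⟩
      rw [toParamRing_rename, ← map_mul, mul_comm, hs]
  | add p q hp hq =>
      obtain ⟨d1, hd1, p1, hp1⟩ := hp
      obtain ⟨d2, hd2, p2, hp2⟩ := hq
      refine ⟨d1 * d2, mul_ne_zero hd1 hd2,
        rename Sum.inr d2 * p1 + rename Sum.inr d1 * p2, ?_⟩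
      rw [map_add, map_mul (toParamRing n r), map_mul (toParamRing n r),
        toParamRing_rename, toParamRing_rename, ← hp1, ← hp2, map_mul, C_mul]
      ring
  | mul_X p i hp =>
      obtain ⟨d, hd, p', hp'⟩ := hp
      refine ⟨d, hd, p' * X (Sum.inl i), ?_⟩
      rw [map_mul, ← hp']
      have : toParamRing n r (X (Sum.inl i)) = X i := by simp [toParamRing]
      rw [this]; ring

set_option synthInstance.maxHeartbeats 1000000 in
lemma clearU {n r l : ℕ} (v : Fin l → MvPolynomial (Fin n ⊕ Fin r) ℚ)
    (U' : Ideal (MvPolynomial (Fin n ⊕ Fin r) ℚ))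
    (hU' : U' = Ideal.span (Set.range v))
    (f : MvPolynomial (Fin n) (FractionRing (MvPolynomial (Fin r) ℚ)))
    (hf : f ∈ Ideal.span (Set.range fun i => toParamRing n r (v i))) :
    ∃ d : MvPolynomial (Fin r) ℚ, d ≠ 0 ∧ ∃ h ∈ U',
      C (algebraMap (MvPolynomial (Fin r) ℚ)
        (FractionRing (MvPolynomial (Fin r) ℚ)) d) * f = toParamRing n r h := by
  refine Submodule.span_induction ?_ ?_ ?_ ?_ hf
  · rintro x ⟨i, rfl⟩
    exact ⟨1, one_ne_zero, v i, by rw [hU']; exact Ideal.subset_span ⟨i, rfl⟩,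
      by rw [map_one, map_one, one_mul]⟩
  · exact ⟨1, one_ne_zero, 0, U'.zero_mem, by rw [mul_zero, map_zero]⟩
  · rintro x y - - ⟨d1, hd1, h1, hh1, he1⟩ ⟨d2, hd2, h2, hh2, he2⟩
    refine ⟨d1 * d2, mul_ne_zero hd1 hd2,
      rename Sum.inr d2 * h1 + rename Sum.inr d1 * h2,
      U'.add_mem (U'.mul_mem_left _ hh1) (U'.mul_mem_left _ hh2), ?_⟩
    rw [map_add, map_mul (toParamRing n r), map_mul (toParamRing n r),
      toParamRing_rename, toParamRing_rename, ← he1, ← he2, map_mul, C_mul]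
    ring
  · rintro q x - ⟨d, hd, h, hh, he⟩
    obtain ⟨e, he0, p, hep⟩ := clearT q
    refine ⟨e * d, mul_ne_zero he0 hd, p * h, U'.mul_mem_left _ hh, ?_⟩
    rw [map_mul (toParamRing n r), ← hep, ← he, map_mul, C_mul, smul_eq_mul]
    ring

/-- Localization: a Gröbner basis of `U' ⊆ ℚ[z,c]` with respect to the
global block ordering `(≻₁, ≻₂)` with `z ≻ c` maps under `φ` to a Gröbner basis of
`U ⊆ ℚ(c)[z]` with respect to `≻₁`. -/
theorem groebner_basis_localization (n r l : ℕ)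
    (le1 : (Fin n →₀ ℕ) → (Fin n →₀ ℕ) → Prop)
    (le2 : (Fin r →₀ ℕ) → (Fin r →₀ ℕ) → Prop)
    -- `le1` is a global monomial order on the z-monomials
    (h1refl : ∀ α, le1 α α)
    (h1trans : ∀ α β γ, le1 α β → le1 β γ → le1 α γ)
    (h1antisymm : ∀ α β, le1 α β → le1 β α → α = β)
    (h1total : ∀ α β, le1 α β ∨ le1 β α)
    (h1add : ∀ α β γ, le1 α β → le1 (α + γ) (β + γ))
    (h1global : ∀ α, le1 0 α)
    -- `le2` is a global monomial order on the c-monomials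
    (h2refl : ∀ α, le2 α α)
    (h2trans : ∀ α β γ, le2 α β → le2 β γ → le2 α γ)
    (h2antisymm : ∀ α β, le2 α β → le2 β α → α = β)
    (h2total : ∀ α β, le2 α β ∨ le2 β α)
    (h2add : ∀ α β γ, le2 α β → le2 (α + γ) (β + γ))
    (h2global : ∀ α, le2 0 α)
    -- `leB` is the block ordering `(≻₁, ≻₂)`
    (leB : ((Fin n ⊕ Fin r) →₀ ℕ) → ((Fin n ⊕ Fin r) →₀ ℕ) → Prop)
    (hleB : ∀ μ ν, leB μ ν ↔
      ((le1 (zpart μ) (zpart ν) ∧ zpart μ ≠ zpart ν) ∨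
        (zpart μ = zpart ν ∧ le2 (cpart μ) (cpart ν))))
    (v : Fin l → MvPolynomial (Fin n ⊕ Fin r) ℚ)
    (U' : Ideal (MvPolynomial (Fin n ⊕ Fin r) ℚ))
    (hU' : U' = Ideal.span (Set.range v))
    (U : Ideal (MvPolynomial (Fin n) (FractionRing (MvPolynomial (Fin r) ℚ))))
    (hU : U = Ideal.span (Set.range fun i => toParamRing n r (v i)))
    -- `G` is a Gröbner basis of `U'` with respect to the block ordering `leB`
    (G : Finset (MvPolynomial (Fin n ⊕ Fin r) ℚ))
    (hGne : ∀ g ∈ G, g ≠ 0)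
    (hGsub : ∀ g ∈ G, g ∈ U')
    (hGB : ∀ f ∈ U', f ≠ 0 → ∃ g ∈ G, ∃ α β,
      IsLeadMon leB f α ∧ IsLeadMon leB g β ∧ β ≤ α) :
    -- then `φ(G)` is a Gröbner basis of `U` with respect to `≻₁`
    ∀ f ∈ U, f ≠ 0 → ∃ g ∈ G, ∃ α β,
      IsLeadMon le1 f α ∧ IsLeadMon le1 (toParamRing n r g) β ∧ β ≤ α := by
  intro f hf hf0
  rw [hU] at hf
  obtain ⟨d, hd, h, hhU', heq⟩ := clearU v U' hU' f hf
  have hd' : algebraMap (MvPolynomial (Fin r) ℚ)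
      (FractionRing (MvPolynomial (Fin r) ℚ)) d ≠ 0 := by
    rw [Ne, IsFractionRing.to_map_eq_zero_iff]; exact hd
  have hh0 : h ≠ 0 := by
    intro h0
    rw [h0, map_zero] at heq
    rcases mul_eq_zero.mp heq with hc | hf'
    · exact hd' (by simpa using hc)
    · exact hf0 hf'
  obtain ⟨g, hgG, α', β', hlf, hlg, hle⟩ := hGB h hhU' hh0
  have hsupp : (toParamRing n r h).support = f.support := by
    rw [← heq]
    ext β
    simp only [mem_support_iff, coeff_C_mul]
    constructor
    · intro hne h0; exact hne (by rw [h0, mul_zero])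
    · intro hne h0; exact hne ((mul_eq_zero.mp h0).resolve_left hd')
  have hlf' := lead_transfer le1 le2 h1refl leB hleB h α' hlf
  refine ⟨g, hgG, zpart α', zpart β',
    ⟨hsupp ▸ hlf'.1, fun β hβ => hlf'.2 β (by rw [hsupp]; exact hβ)⟩,
    lead_transfer le1 le2 h1refl leB hleB g β' hlg, ?_⟩
  rw [Finsupp.le_def]
  intro i
  simpa using Finsupp.le_def.mp hle (Sum.inl i)
end

section
/- Let F be a field, let A = F[z₁,…,zₙ] with a monomial order ⪯, and let g₁,…,g_l be nonzero polynomials in A. For nonzero f, g ∈ A define spoly(f,g) = (X^γ / LT(f)) · f − (X^γ / LT(g)) · g, where LT denotes the ⪯-leading term and X^γ is the least common multiple of the leading monomials of f and g (γ is the componentwise maximum of their leading exponent vectors). Suppose that for all i ≠ j the S-polynomial spoly(g_i, g_j) admits a standard representation: there exist a₁,…,a_l ∈ A with spoly(g_i,g_j) = Σ_{k=1}^{l} a_k g_k such that for every k with a_k g_k ≠ 0, the ⪯-leading monomial of a_k g_k is ⪯ the ⪯-leading monomial of spoly(g_i,g_j) (this holds vacuously when spoly(g_i,g_j) = 0 provided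 all a_k g_k = 0). Then {g₁,…,g_l} is a Gröbner basis of the ideal it generates: for every nonzero f in the ideal ⟨g₁,…,g_l⟩ there exists i such that the ⪯-leading monomial of g_i divides the ⪯-leading monomial of f. -/
set_option linter.unusedSectionVars false
set_option linter.unusedVariables false
set_option maxHeartbeats 1000000


open MvPolynomial

/-- The S-polynomial of `f` and `g`, where `αf`, `αg` are their respective leading
monomials: `spoly(f,g) = (X^γ / LT f) · f − (X^γ / LT g) · g`, with
`γ = max(αf, αg)` componentwise (so `X^γ = lcm` of the leading monomials). -/
noncomputable def spolyOf {F : Type*} [Field F] {n : ℕ}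
    (f g : MvPolynomial (Fin n) F) (αf αg : Fin n →₀ ℕ) : MvPolynomial (Fin n) F :=
  monomial (Finsupp.zipWith max (max_self 0) αf αg - αf) ((coeff αf f)⁻¹) * f -
  monomial (Finsupp.zipWith max (max_self 0) αf αg - αg) ((coeff αg g)⁻¹) * g

namespace BuchAux

variable {n : ℕ}

def SLT (le : (Fin n →₀ ℕ) → (Fin n →₀ ℕ) → Prop) (α β : Fin n →₀ ℕ) : Prop :=
  le α β ∧ α ≠ β

section Order

variable {le : (Fin n →₀ ℕ) → (Fin n →₀ ℕ) → Prop}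
  (hrefl : ∀ α, le α α)
  (htrans : ∀ α β γ, le α β → le β γ → le α γ)
  (hantisymm : ∀ α β, le α β → le β α → α = β)
  (htotal : ∀ α β, le α β ∨ le β α)
  (hadd : ∀ α β γ, le α β → le (α + γ) (β + γ))
  (hglobal : ∀ α, le 0 α)

include hrefl htrans hantisymm htotal hadd hglobal

theorem comple_le {α β : Fin n →₀ ℕ} (h : α ≤ β) : le α β := by
  have h1 : le (0 + α) ((β - α) + α) := hadd 0 (β - α) α (hglobal _)
  rwa [zero_add, tsub_add_cancel_of_le h] at h1

theorem slt_wf : WellFounded (SLT le) := by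
  have hpwo : (Set.univ : Set (Fin n →₀ ℕ)).PartiallyWellOrderedOn le := by
    intro f
    obtain ⟨m, k, h1, h2⟩ := Set.isPWO_of_wellQuasiOrderedLE (Set.univ : Set (Fin n →₀ ℕ)) f
    exact ⟨m, k, h1, comple_le hrefl htrans hantisymm htotal hadd hglobal h2⟩
  haveI : IsPreorder (Fin n →₀ ℕ) le := { refl := hrefl, trans := htrans }
  have h := hpwo.wellFoundedOn
  rw [Set.wellFoundedOn_univ] at h
  exact Subrelation.wf
    (fun {a b} hab => ⟨hab.1, fun hba => hab.2 (hantisymm _ _ hab.1 hba)⟩) h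

theorem exists_max (s : Finset (Fin n →₀ ℕ)) (hs : s.Nonempty) :
    ∃ α ∈ s, ∀ β ∈ s, le β α := by
  classical
  induction s using Finset.induction_on with
  | empty => exact absurd hs (by simp)
  | @insert a s ha ih =>
    rcases s.eq_empty_or_nonempty with rfl | hs'
    · exact ⟨a, by simp, by simpa using hrefl a⟩
    · obtain ⟨m, hm, hmax⟩ := ih hs'
      rcases htotal a m with h | h
      · exact ⟨m, Finset.mem_insert_of_mem hm, by
          intro β hβ
          rcases Finset.mem_insert.mp hβ with rfl | hβ
          · exact h
          · exact hmax β hβ⟩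
      · exact ⟨a, Finset.mem_insert_self a s, by
          intro β hβ
          rcases Finset.mem_insert.mp hβ with rfl | hβ
          · exact hrefl β
          · exact htrans _ _ _ (hmax β hβ) h⟩

theorem le_cancel {α β γ : Fin n →₀ ℕ} (h : le (α + γ) (β + γ)) : le α β := by
  rcases htotal α β with h' | h'
  · exact h'
  · have h2 := hantisymm _ _ h (hadd _ _ γ h')
    have h3 : α = β := add_right_cancel h2
    exact h3 ▸ hrefl α

theorem le_add_le {α β γ δ : Fin n →₀ ℕ} (h1 : le α β) (h2 : le γ δ) :
    le (α + γ) (β + δ) := by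
  refine htrans _ _ _ (hadd _ _ γ h1) ?_
  rw [add_comm β γ, add_comm β δ]
  exact hadd _ _ β h2

theorem slt_add {α β γ δ : Fin n →₀ ℕ} (h1 : SLT le α β) (h2 : le γ δ) :
    SLT le (α + γ) (β + δ) := by
  refine ⟨le_add_le hrefl htrans hantisymm htotal hadd hglobal h1.1 h2, ?_⟩
  intro heq
  have h3 : le (α + γ) (α + δ) := by
    rw [add_comm α γ, add_comm α δ]; exact hadd _ _ α h2
  rw [heq] at h3
  exact h1.2 (hantisymm _ _ h1.1
    (le_cancel hrefl htrans hantisymm htotal hadd hglobal h3))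

theorem le_slt_trans {α β γ : Fin n →₀ ℕ} (h1 : le α β) (h2 : SLT le β γ) :
    SLT le α γ := by
  refine ⟨htrans _ _ _ h1 h2.1, ?_⟩
  rintro rfl
  exact h2.2 (hantisymm _ _ h2.1 h1)

section Poly

variable {F : Type*} [Field F]

theorem exists_leadMon {f : MvPolynomial (Fin n) F} (hf : f ≠ 0) :
    ∃ α, IsLeadMon le f α := by
  obtain ⟨α, hα, hmax⟩ := exists_max hrefl htrans hantisymm htotal hadd hglobal
    f.support (support_nonempty.mpr hf)
  exact ⟨α, hα, hmax⟩

omit hrefl htrans htotal hadd hglobal in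
theorem leadMon_unique {f : MvPolynomial (Fin n) F} {α β : Fin n →₀ ℕ}
    (h1 : IsLeadMon le f α) (h2 : IsLeadMon le f β) : α = β :=
  hantisymm _ _ (h2.2 α h1.1) (h1.2 β h2.1)

theorem coeff_mul_leadMon {f g : MvPolynomial (Fin n) F} {α β : Fin n →₀ ℕ}
    (hf : IsLeadMon le f α) (hg : IsLeadMon le g β) :
    coeff (α + β) (f * g) = coeff α f * coeff β g := by
  rw [coeff_mul]
  apply Finset.sum_eq_single (α, β)
  · rintro ⟨a, b⟩ hab hne
    rw [Finset.HasAntidiagonal.mem_antidiagonal] at hab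
    by_cases ha : coeff a f = 0
    · simp [ha]
    by_cases hb : coeff b g = 0
    · simp [hb]
    have ha' : a ∈ f.support := mem_support_iff.mpr ha
    have hb' : b ∈ g.support := mem_support_iff.mpr hb
    by_cases haα : a = α
    · subst haα
      have hbβ : b = β := add_left_cancel hab
      exact absurd (by rw [hbβ]) hne
    · have hslt : SLT le (a + b) (α + β) :=
        slt_add hrefl htrans hantisymm htotal hadd hglobal
          ⟨hf.2 a ha', haα⟩ (hg.2 b hb')
      exact absurd hab hslt.2
  · intro h
    simp at h

theorem leadMon_mul {f g : MvPolynomial (Fin n) F} {α β : Fin n →₀ ℕ}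
    (hf : IsLeadMon le f α) (hg : IsLeadMon le g β) :
    IsLeadMon le (f * g) (α + β) := by
  constructor
  · rw [mem_support_iff, coeff_mul_leadMon hrefl htrans hantisymm htotal hadd hglobal hf hg]
    exact mul_ne_zero (mem_support_iff.mp hf.1) (mem_support_iff.mp hg.1)
  · intro τ hτ
    obtain ⟨a, ha, b, hb, hab⟩ := Finset.mem_add.mp (support_mul f g hτ)
    rw [← hab]
    exact le_add_le hrefl htrans hantisymm htotal hadd hglobal (hf.2 a ha) (hg.2 b hb)

omit hrefl htrans hantisymm htotal hadd hglobal in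
theorem mem_support_monomial {s t : Fin n →₀ ℕ} {c : F}
    (h : t ∈ (monomial s c).support) : t = s := by
  by_contra hne
  have h1 := mem_support_iff.mp h
  rw [coeff_monomial] at h1
  simp [Ne.symm hne] at h1

theorem spoly_support {gi gj : MvPolynomial (Fin n) F} {βi βj : Fin n →₀ ℕ}
    (hi : IsLeadMon le gi βi) (hj : IsLeadMon le gj βj) :
    ∀ τ ∈ (spolyOf gi gj βi βj).support,
      SLT le τ (Finsupp.zipWith max (max_self 0) βi βj) := by
  classical
  intro τ hτ
  set γ := Finsupp.zipWith max (max_self 0) βi βj with hγ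
  have hβiγ : βi ≤ γ := fun k => by
    rw [hγ, Finsupp.zipWith_apply]; exact le_max_left _ _
  have hβjγ : βj ≤ γ := fun k => by
    rw [hγ, Finsupp.zipWith_apply]; exact le_max_right _ _
  have h1 : (γ - βi) + βi = γ := tsub_add_cancel_of_le hβiγ
  have h2 : (γ - βj) + βj = γ := tsub_add_cancel_of_le hβjγ
  have e1 : coeff (γ - βi + βi) (monomial (γ - βi) ((coeff βi gi)⁻¹) * gi) = 1 := by
    rw [coeff_monomial_mul]
    exact inv_mul_cancel₀ (mem_support_iff.mp hi.1)
  rw [h1] at e1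
  have e2 : coeff (γ - βj + βj) (monomial (γ - βj) ((coeff βj gj)⁻¹) * gj) = 1 := by
    rw [coeff_monomial_mul]
    exact inv_mul_cancel₀ (mem_support_iff.mp hj.1)
  rw [h2] at e2
  have hcoeff : coeff γ (spolyOf gi gj βi βj) = 0 := by
    rw [spolyOf, coeff_sub, ← hγ, e1, e2, sub_self]
  constructor
  · rcases Finset.mem_union.mp (support_sub _ _ _ hτ) with hmem | hmem
    · obtain ⟨t1, ht1, t2, ht2, hteq⟩ := Finset.mem_add.mp (support_mul _ _ hmem)
      have ht1' : t1 = γ - βi := mem_support_monomial ht1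
      rw [← hteq, ht1']
      have := le_add_le hrefl htrans hantisymm htotal hadd hglobal
        (hrefl (γ - βi)) (hi.2 t2 ht2)
      rwa [h1] at this
    · obtain ⟨t1, ht1, t2, ht2, hteq⟩ := Finset.mem_add.mp (support_mul _ _ hmem)
      have ht1' : t1 = γ - βj := mem_support_monomial ht1
      rw [← hteq, ht1']
      have := le_add_le hrefl htrans hantisymm htotal hadd hglobal
        (hrefl (γ - βj)) (hj.2 t2 ht2)
      rwa [h2] at this
  · rintro rfl
    exact (mem_support_iff.mp hτ) hcoeff

end Poly

end Order

end BuchAux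

/-- Buchberger's criterion: if every S-polynomial `spoly(gᵢ, gⱼ)`
(for `i ≠ j`) admits a standard representation `spoly(gᵢ,gⱼ) = Σ a_k g_k` in which
the leading monomial of every nonzero `a_k g_k` is dominated by the leading
monomial of `spoly(gᵢ,gⱼ)`, then `{g₁,…,g_l}` is a Gröbner basis of the ideal
it generates. -/
theorem buchberger_criterion (F : Type*) [Field F] (n l : ℕ)
    (le : (Fin n →₀ ℕ) → (Fin n →₀ ℕ) → Prop)
    -- `le` is a global monomial order
    (hrefl : ∀ α, le α α)
    (htrans : ∀ α β γ, le α β → le β γ → le α γ)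
    (hantisymm : ∀ α β, le α β → le β α → α = β)
    (htotal : ∀ α β, le α β ∨ le β α)
    (hadd : ∀ α β γ, le α β → le (α + γ) (β + γ))
    (hglobal : ∀ α, le 0 α)
    (g : Fin l → MvPolynomial (Fin n) F)
    (hg : ∀ i, g i ≠ 0)
    (hbuch : ∀ i j : Fin l, i ≠ j →
      ∀ αi αj : Fin n →₀ ℕ, IsLeadMon le (g i) αi → IsLeadMon le (g j) αj →
        ∃ a : Fin l → MvPolynomial (Fin n) F,
          spolyOf (g i) (g j) αi αj = ∑ k, a k * g k ∧
          ∀ k, a k * g k ≠ 0 → ∃ β σ : Fin n →₀ ℕ,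
            IsLeadMon le (a k * g k) β ∧
            IsLeadMon le (spolyOf (g i) (g j) αi αj) σ ∧ le β σ) :
    ∀ f ∈ Ideal.span (Set.range g), f ≠ 0 →
      ∃ i : Fin l, ∃ α β : Fin n →₀ ℕ,
        IsLeadMon le f α ∧ IsLeadMon le (g i) β ∧ β ≤ α := by
  classical
  intro f hfmem hf0
  have wf := BuchAux.slt_wf (le := le) hrefl htrans hantisymm htotal hadd hglobal
  have key : ∀ δ : Fin n →₀ ℕ,
      ∀ (p : MvPolynomial (Fin n) F) (a : Fin l → MvPolynomial (Fin n) F),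
      p = ∑ i, a i * g i → p ≠ 0 →
      (∀ i, ∀ τ ∈ (a i * g i).support, le τ δ) →
      ∃ i : Fin l, ∃ α β : Fin n →₀ ℕ,
        IsLeadMon le p α ∧ IsLeadMon le (g i) β ∧ β ≤ α := by
    refine fun δ0 => wf.induction
      (C := fun δ => ∀ (p : MvPolynomial (Fin n) F)
          (a : Fin l → MvPolynomial (Fin n) F),
        p = ∑ i, a i * g i → p ≠ 0 →
        (∀ i, ∀ τ ∈ (a i * g i).support, le τ δ) →
        ∃ i : Fin l, ∃ α β : Fin n →₀ ℕ,
          IsLeadMon le p α ∧ IsLeadMon le (g i) β ∧ β ≤ α) δ0 ?_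
    intro δ IH p a hpa hp0 hbound
    -- a common finishing move : a representation all of whose monomials are < δ
    have finish : ∀ (a' : Fin l → MvPolynomial (Fin n) F),
        p = ∑ i, a' i * g i →
        (∀ k, ∀ τ ∈ (a' k * g k).support, BuchAux.SLT le τ δ) →
        ∃ i : Fin l, ∃ α β : Fin n →₀ ℕ,
          IsLeadMon le p α ∧ IsLeadMon le (g i) β ∧ β ≤ α := by
      intro a' hpa' hbd'
      set T := Finset.univ.biUnion (fun k : Fin l => (a' k * g k).support) with hT
      have hTne : T.Nonempty := by
        rw [Finset.nonempty_iff_ne_empty]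
        intro hTe
        apply hp0
        rw [hpa']
        apply Finset.sum_eq_zero
        intro k _
        rw [← support_eq_empty]
        rw [Finset.eq_empty_iff_forall_notMem]
        intro τ hτ
        have hmm : τ ∈ T := Finset.mem_biUnion.mpr ⟨k, Finset.mem_univ k, hτ⟩
        rw [hTe] at hmm
        exact absurd hmm (Finset.notMem_empty τ)
      obtain ⟨δ', hδ'T, hmax⟩ := BuchAux.exists_max hrefl htrans hantisymm htotal hadd
        hglobal T hTne
      obtain ⟨k0, _, hk0⟩ := Finset.mem_biUnion.mp hδ'T
      exact IH δ' (hbd' k0 δ' hk0) p a' hpa' hp0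
        (fun i τ hτ => hmax τ (Finset.mem_biUnion.mpr ⟨i, Finset.mem_univ i, hτ⟩))
    by_cases hδp : δ ∈ p.support
    · -- case A : δ occurs in p, so it is the leading monomial of p
      have hleadp : IsLeadMon le p δ := by
        refine ⟨hδp, fun τ hτ => ?_⟩
        rw [hpa] at hτ
        obtain ⟨i, _, hi⟩ := Finset.mem_biUnion.mp (support_sum hτ)
        exact hbound i τ hi
      have h0 : coeff δ p ≠ 0 := mem_support_iff.mp hδp
      rw [hpa, coeff_sum] at h0
      obtain ⟨i, _, hi⟩ := Finset.exists_ne_zero_of_sum_ne_zero h0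
      have hgi0 : a i * g i ≠ 0 := by
        intro h; rw [h] at hi; simp at hi
      have hai0 : a i ≠ 0 := left_ne_zero_of_mul hgi0
      obtain ⟨μ, hμ⟩ := BuchAux.exists_leadMon hrefl htrans hantisymm htotal hadd hglobal hai0
      obtain ⟨β, hβ⟩ := BuchAux.exists_leadMon hrefl htrans hantisymm htotal hadd hglobal (hg i)
      have hlm : IsLeadMon le (a i * g i) (μ + β) :=
        BuchAux.leadMon_mul hrefl htrans hantisymm htotal hadd hglobal hμ hβ
      have hlm2 : IsLeadMon le (a i * g i) δ :=
        ⟨mem_support_iff.mpr hi, fun τ hτ => hbound i τ hτ⟩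
      have heq : μ + β = δ := BuchAux.leadMon_unique hantisymm hlm hlm2
      exact ⟨i, δ, β, hleadp, hβ, heq ▸ self_le_add_left β μ⟩
    · -- case B : cancellation at δ
      have hcp : coeff δ p = 0 := notMem_support_iff.mp hδp
      set S : Finset (Fin l) :=
        Finset.univ.filter (fun i => coeff δ (a i * g i) ≠ 0) with hS
      have hSmemD : ∀ i ∈ S, coeff δ (a i * g i) ≠ 0 :=
        fun i hi => (Finset.mem_filter.mp hi).2
      have hnotS : ∀ i, i ∉ S → coeff δ (a i * g i) = 0 := by
        intro i hi
        by_contra h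
        exact hi (Finset.mem_filter.mpr ⟨Finset.mem_univ i, h⟩)
      rcases S.eq_empty_or_nonempty with hSe | ⟨i0, hi0S⟩
      · -- S empty : all monomials already < δ
        refine finish a hpa ?_
        intro k τ hτ
        refine ⟨hbound k τ hτ, ?_⟩
        rintro rfl
        exact (mem_support_iff.mp hτ) (hnotS k (by rw [hSe]; exact Finset.notMem_empty k))
      · -- main case : rewrite via S-polynomials
        choose β hβ using
          fun i => BuchAux.exists_leadMon hrefl htrans hantisymm htotal hadd hglobal (hg i)
        have hμ : ∀ i ∈ S, IsLeadMon le (a i) (δ - β i) ∧ (δ - β i) + β i = δ := by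
          intro i hiS
          have hdi : coeff δ (a i * g i) ≠ 0 := hSmemD i hiS
          have hne : a i * g i ≠ 0 := by
            intro h; rw [h] at hdi; simp at hdi
          have hai : a i ≠ 0 := left_ne_zero_of_mul hne
          obtain ⟨μ, hμ'⟩ := BuchAux.exists_leadMon hrefl htrans hantisymm htotal hadd
            hglobal hai
          have h1 : IsLeadMon le (a i * g i) (μ + β i) :=
            BuchAux.leadMon_mul hrefl htrans hantisymm htotal hadd hglobal hμ' (hβ i)
          have h2 : IsLeadMon le (a i * g i) δ :=
            ⟨mem_support_iff.mpr hdi, fun τ hτ => hbound i τ hτ⟩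
          have h3 : μ + β i = δ := BuchAux.leadMon_unique hantisymm h1 h2
          have h4 : μ = δ - β i := by rw [← h3, add_tsub_cancel_right]
          exact ⟨h4 ▸ hμ', by rw [← h4, h3]⟩
        have hβδ : ∀ i ∈ S, β i ≤ δ := by
          intro i hiS
          calc β i ≤ (δ - β i) + β i := self_le_add_left _ _
          _ = δ := (hμ i hiS).2
        have hβγ : ∀ i j : Fin l, β i ≤ Finsupp.zipWith max (max_self 0) (β i) (β j) := by
          intro i j
          rw [Finsupp.le_def]
          intro k
          rw [Finsupp.zipWith_apply]
          exact le_max_left _ _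
        have hβγ' : ∀ i j : Fin l, β j ≤ Finsupp.zipWith max (max_self 0) (β i) (β j) := by
          intro i j
          rw [Finsupp.le_def]
          intro k
          rw [Finsupp.zipWith_apply]
          exact le_max_right _ _
        have hγδ : ∀ i ∈ S, Finsupp.zipWith max (max_self 0) (β i) (β i0) ≤ δ := by
          intro i hiS
          rw [Finsupp.le_def]
          intro k
          rw [Finsupp.zipWith_apply]
          exact max_le (Finsupp.le_def.mp (hβδ i hiS) k) (Finsupp.le_def.mp (hβδ i0 hi0S) k)
        set Tk : Fin l → MvPolynomial (Fin n) F :=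
          fun k => monomial (δ - β k) (coeff (δ - β k) (a k)) with hTk
        set q : Fin l → MvPolynomial (Fin n) F :=
          fun i => monomial (δ - β i) ((coeff (β i) (g i))⁻¹) * g i with hq
        have hTq : ∀ i ∈ S, Tk i * g i = coeff δ (a i * g i) • q i := by
          intro i hiS
          have hLC : coeff (β i) (g i) ≠ 0 := mem_support_iff.mp (hβ i).1
          have hdval : coeff δ (a i * g i) = coeff (δ - β i) (a i) * coeff (β i) (g i) := by
            conv_lhs => rw [← (hμ i hiS).2]
            exact BuchAux.coeff_mul_leadMon hrefl htrans hantisymm htotal hadd hglobal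
              (hμ i hiS).1 (hβ i)
          simp only [hTk, hq]
          rw [← smul_mul_assoc, smul_monomial, smul_eq_mul, hdval,
            mul_inv_cancel_right₀ hLC]
        have hU : ∀ i ∈ S.erase i0,
            monomial (δ - Finsupp.zipWith max (max_self 0) (β i) (β i0)) (1 : F) *
              spolyOf (g i) (g i0) (β i) (β i0) = q i - q i0 := by
          intro i hi
          have hiS := Finset.mem_of_mem_erase hi
          have e1 : (δ - Finsupp.zipWith max (max_self 0) (β i) (β i0)) +
              (Finsupp.zipWith max (max_self 0) (β i) (β i0) - β i) = δ - β i :=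
            tsub_add_tsub_cancel (hγδ i hiS) (hβγ i i0)
          have e2 : (δ - Finsupp.zipWith max (max_self 0) (β i) (β i0)) +
              (Finsupp.zipWith max (max_self 0) (β i) (β i0) - β i0) = δ - β i0 :=
            tsub_add_tsub_cancel (hγδ i hiS) (hβγ' i i0)
          unfold spolyOf
          rw [mul_sub, ← mul_assoc, ← mul_assoc, monomial_mul, monomial_mul,
            one_mul, one_mul, e1, e2]
        have hsum0 : ∑ i ∈ S, coeff δ (a i * g i) = 0 := by
          have h1 : ∑ i ∈ S, coeff δ (a i * g i) = ∑ i, coeff δ (a i * g i) :=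
            Finset.sum_subset (Finset.subset_univ S) (fun x _ hx => hnotS x hx)
          rw [h1, ← coeff_sum, ← hpa]
          exact hcp
        have hsp : ∀ i : Fin l, ∃ b' : Fin l → MvPolynomial (Fin n) F,
            i ∈ S.erase i0 →
              ((monomial (δ - Finsupp.zipWith max (max_self 0) (β i) (β i0)))
                  (coeff δ (a i * g i)) *
                 spolyOf (g i) (g i0) (β i) (β i0) = ∑ k, b' k * g k ∧
               ∀ k, ∀ τ ∈ (b' k * g k).support, BuchAux.SLT le τ δ) := by
          intro i
          by_cases hi : i ∈ S.erase i0
          · have hiS : i ∈ S := Finset.mem_of_mem_erase hi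
            have hine : i ≠ i0 := Finset.ne_of_mem_erase hi
            obtain ⟨b, hb1, hb2⟩ := hbuch i i0 hine (β i) (β i0) (hβ i) (hβ i0)
            refine ⟨fun k => monomial
              (δ - Finsupp.zipWith max (max_self 0) (β i) (β i0))
              (coeff δ (a i * g i)) * b k, fun _ => ⟨?_, ?_⟩⟩
            · rw [hb1, Finset.mul_sum]
              exact Finset.sum_congr rfl fun k _ => (mul_assoc _ _ _).symm
            · intro k τ hτ
              rw [mul_assoc] at hτ
              by_cases hbk : b k * g k = 0
              · rw [hbk, mul_zero] at hτ; simp at hτ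
              obtain ⟨β', σ, hβ', hσ, hβσ⟩ := hb2 k hbk
              have hσγ : BuchAux.SLT le σ
                  (Finsupp.zipWith max (max_self 0) (β i) (β i0)) :=
                BuchAux.spoly_support hrefl htrans hantisymm htotal hadd hglobal
                  (hβ i) (hβ i0) σ hσ.1
              obtain ⟨t1, ht1, t2, ht2, hteq⟩ := Finset.mem_add.mp (support_mul _ _ hτ)
              have ht1' : t1 = δ - Finsupp.zipWith max (max_self 0) (β i) (β i0) :=
                BuchAux.mem_support_monomial ht1
              have hslt2 : BuchAux.SLT le t2
                  (Finsupp.zipWith max (max_self 0) (β i) (β i0)) :=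
                BuchAux.le_slt_trans hrefl htrans hantisymm htotal hadd hglobal
                  (htrans _ _ _ (hβ'.2 t2 ht2) hβσ) hσγ
              have hfin := BuchAux.slt_add hrefl htrans hantisymm htotal hadd hglobal
                hslt2 (hrefl (δ - Finsupp.zipWith max (max_self 0) (β i) (β i0)))
              have e3 : t2 + (δ - Finsupp.zipWith max (max_self 0) (β i) (β i0)) = τ := by
                rw [add_comm, ← ht1']
                exact hteq
              have e4 : Finsupp.zipWith max (max_self 0) (β i) (β i0) +
                  (δ - Finsupp.zipWith max (max_self 0) (β i) (β i0)) = δ := by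
                rw [add_comm]
                exact tsub_add_cancel_of_le (hγδ i hiS)
              rw [e3, e4] at hfin
              exact hfin
          · exact ⟨0, fun h => absurd h hi⟩
        choose b' hb' using hsp
        -- the telescoping identity
        have hT : ∑ i ∈ S, Tk i * g i
            = ∑ i ∈ S.erase i0,
                monomial (δ - Finsupp.zipWith max (max_self 0) (β i) (β i0))
                  (coeff δ (a i * g i)) *
                  spolyOf (g i) (g i0) (β i) (β i0) := by
          have c1 : ∑ i ∈ S, Tk i * g i = ∑ i ∈ S, coeff δ (a i * g i) • q i :=
            Finset.sum_congr rfl hTq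
          have c2 : ∑ i ∈ S, coeff δ (a i * g i) • q i
              = ∑ i ∈ S, coeff δ (a i * g i) • (q i - q i0) := by
            have hsplit : ∑ i ∈ S, coeff δ (a i * g i) • q i
                = ∑ i ∈ S, (coeff δ (a i * g i) • (q i - q i0)
                    + coeff δ (a i * g i) • q i0) := by
              apply Finset.sum_congr rfl
              intro i _
              rw [smul_sub]
              abel
            rw [hsplit, Finset.sum_add_distrib, ← Finset.sum_smul, hsum0, zero_smul,
              add_zero]
          have c3 : ∑ i ∈ S, coeff δ (a i * g i) • (q i - q i0)
              = ∑ i ∈ S.erase i0, coeff δ (a i * g i) • (q i - q i0) :=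
            (Finset.sum_erase _ (by rw [sub_self, smul_zero])).symm
          rw [c1, c2, c3]
          apply Finset.sum_congr rfl
          intro i hi
          rw [← hU i hi, ← smul_mul_assoc, smul_monomial, smul_eq_mul, mul_one]
        -- the new representation
        set a' : Fin l → MvPolynomial (Fin n) F :=
          fun k => (if k ∈ S then a k - Tk k else a k) + ∑ i ∈ S.erase i0, b' i k
          with ha'
        have hstep1 : ∀ k, a' k * g k =
            (a k * g k - (if k ∈ S then Tk k * g k else 0))
              + ∑ i ∈ S.erase i0, b' i k * g k := by
          intro k
          simp only [ha']
          rw [add_mul, Finset.sum_mul]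
          congr 1
          by_cases hk : k ∈ S
          · simp [hk, sub_mul]
          · simp [hk]
        have hrep : p = ∑ k, a' k * g k := by
          have hsum' : ∑ k, a' k * g k
              = (∑ k, a k * g k - ∑ k, (if k ∈ S then Tk k * g k else 0))
                + ∑ k, ∑ i ∈ S.erase i0, b' i k * g k := by
            rw [Finset.sum_congr rfl (fun k _ => hstep1 k), Finset.sum_add_distrib,
              Finset.sum_sub_distrib]
          have h2 : ∑ k, (if k ∈ S then Tk k * g k else 0) = ∑ k ∈ S, Tk k * g k := by
            rw [Finset.sum_ite_mem, Finset.univ_inter]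
          have h3 : ∑ k : Fin l, ∑ i ∈ S.erase i0, b' i k * g k
              = ∑ i ∈ S.erase i0, ∑ k, b' i k * g k := Finset.sum_comm
          have h4 : ∑ i ∈ S.erase i0, ∑ k, b' i k * g k = ∑ k ∈ S, Tk k * g k := by
            rw [hT]
            exact Finset.sum_congr rfl (fun i hi => ((hb' i hi).1).symm)
          rw [hsum', h2, h3, h4, ← hpa]
          abel
        have hbd' : ∀ k, ∀ τ ∈ (a' k * g k).support, BuchAux.SLT le τ δ := by
          intro k τ hτ
          rw [hstep1 k] at hτ
          rcases Finset.mem_union.mp (support_add hτ) with h | h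
          · by_cases hk : k ∈ S
            · rw [if_pos hk] at h
              have hsm : a k * g k - Tk k * g k = (a k - Tk k) * g k := (sub_mul _ _ _).symm
              rw [hsm] at h
              obtain ⟨t1, ht1, t2, ht2, hteq⟩ := Finset.mem_add.mp (support_mul _ _ h)
              have hkS := hμ k hk
              have ht1ne : t1 ≠ δ - β k := by
                intro hteq1
                have hz : coeff (δ - β k) (a k - Tk k) = 0 := by
                  simp [hTk, coeff_sub, coeff_monomial]
                rw [hteq1] at ht1
                exact (mem_support_iff.mp ht1) hz
              have ht1a : t1 ∈ (a k).support := by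
                have hcc := mem_support_iff.mp ht1
                simp only [hTk, coeff_sub, coeff_monomial, if_neg (Ne.symm ht1ne),
                  sub_zero] at hcc
                exact mem_support_iff.mpr hcc
              have hslt1 : BuchAux.SLT le t1 (δ - β k) := ⟨hkS.1.2 t1 ht1a, ht1ne⟩
              have hfin := BuchAux.slt_add hrefl htrans hantisymm htotal hadd hglobal
                hslt1 ((hβ k).2 t2 ht2)
              rw [hteq, hkS.2] at hfin
              exact hfin
            · rw [if_neg hk, sub_zero] at h
              refine ⟨hbound k τ h, ?_⟩
              rintro rfl
              exact (mem_support_iff.mp h) (hnotS k hk)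
          · obtain ⟨i, hiS', hmem⟩ := Finset.mem_biUnion.mp (support_sum h)
            exact (hb' i hiS').2 k τ hmem
        exact finish a' hrep hbd'
  -- conclude from an arbitrary representation of f
  obtain ⟨c, hc⟩ := (Submodule.mem_span_range_iff_exists_fun (MvPolynomial (Fin n) F)).mp hfmem
  simp only [smul_eq_mul] at hc
  set T := Finset.univ.biUnion (fun k : Fin l => (c k * g k).support) with hT
  have hTne : T.Nonempty := by
    rw [Finset.nonempty_iff_ne_empty]
    intro hTe
    apply hf0
    rw [← hc]
    apply Finset.sum_eq_zero
    intro k _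
    rw [← support_eq_empty]
    rw [Finset.eq_empty_iff_forall_notMem]
    intro τ hτ
    have hmm : τ ∈ T := Finset.mem_biUnion.mpr ⟨k, Finset.mem_univ k, hτ⟩
    rw [hTe] at hmm
    exact absurd hmm (Finset.notMem_empty τ)
  obtain ⟨δ, hδT, hmax⟩ := BuchAux.exists_max hrefl htrans hantisymm htotal hadd hglobal T hTne
  exact key δ f c hc.symm hf0
    (fun i τ hτ => hmax τ (Finset.mem_biUnion.mpr ⟨i, Finset.mem_univ i, hτ⟩))
end

section
/- Let N ≥ 1 and let R be the polynomial ring over ℚ whose variables x_{i,j} = x_{j,i} are indexed by unordered pairs {i,j} of elements of {1,…,N}. Let S be the N×N symmetric matrix over R with entry S_{i,j} = x_{i,j}, and let P = det S ∈ R. Then for all indices i and j in {1,…,N}, the Laplace-expansion identity Σ_{k=1}^{N} (1 + δ_{i,k}) · x_{j,k} · (∂P/∂x_{i,k}) − 2 δ_{i,j} · P = 0 holds, where δ is the Kronecker delta and ∂/∂x_{i,k} denotes the formal partial derivative with respect to the variable indexed by the unordered pair {i,k}. -/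
open MvPolynomial

section Helpers
open Finset Matrix

variable {σ : Type*} [DecidableEq σ]

lemma my_pderiv_prod {ι : Type*} [DecidableEq ι]
    (v : σ) (s : Finset ι) (f : ι → MvPolynomial σ ℚ) :
    pderiv v (∏ a ∈ s, f a) = ∑ a ∈ s, pderiv v (f a) * ∏ b ∈ s.erase a, f b := by
  induction s using Finset.induction_on with
  | empty => simp
  | @insert a s ha ih =>
    rw [Finset.prod_insert ha, pderiv_mul, ih, Finset.sum_insert ha, Finset.erase_insert ha,
      Finset.mul_sum]
    congr 1
    refine Finset.sum_congr rfl fun b hb => ?_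
    rw [Finset.erase_insert_of_ne (by rintro rfl; exact ha hb),
      Finset.prod_insert (fun h => ha (Finset.mem_of_mem_erase h))]
    ring

lemma my_pderiv_det {n : Type*} [DecidableEq n] [Fintype n]
    (v : σ) (M : Matrix n n (MvPolynomial σ ℚ)) :
    pderiv v M.det = ∑ a, (M.updateRow a (fun b => pderiv v (M a b))).det := by
  simp only [Matrix.det_apply]
  rw [map_sum, Finset.sum_comm]
  refine Finset.sum_congr rfl fun g _ => ?_
  rw [← Finset.smul_sum, Units.smul_def, Units.smul_def, map_zsmul]
  congr 1
  rw [my_pderiv_prod, ← Equiv.sum_comp g (fun a => ∏ c, (M.updateRow a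
      (fun b => pderiv v (M a b))) (g c) c)]
  refine Finset.sum_congr rfl fun b _ => ?_
  rw [← Finset.mul_prod_erase Finset.univ _ (Finset.mem_univ b)]
  congr 1
  · rw [Matrix.updateRow_self]
  · refine Finset.prod_congr rfl fun c hc => ?_
    rw [Matrix.updateRow_ne]
    exact fun h => (Finset.mem_erase.mp hc).1 (g.injective h)

lemma my_key {N : ℕ} (S : Matrix (Fin N) (Fin N) (MvPolynomial (Sym2 (Fin N)) ℚ))
    (hS : ∀ a b : Fin N, S a b = X s(a, b)) (i k : Fin N) :
    pderiv s(i,k) S.det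
      = (2 - if i = k then 1 else 0) * S.adjugate k i := by
  have hsymm : Sᵀ = S := by
    ext a b
    rw [Matrix.transpose_apply, hS, hS, Sym2.eq_swap]
  have hadj : S.adjugate i k = S.adjugate k i := by
    conv_rhs => rw [← hsymm]
    rw [← Matrix.adjugate_transpose, Matrix.transpose_apply]
  have hrow : ∀ a : Fin N, (fun b => pderiv s(i,k) (S a b))
      = fun b => if s(a,b) = s(i,k) then (1 : MvPolynomial (Sym2 (Fin N)) ℚ) else 0 := by
    intro a; funext b
    rw [hS, pderiv_X, Pi.single_apply]
  have hrowi : (fun b => if s(i,b) = s(i,k) then (1 : MvPolynomial (Sym2 (Fin N)) ℚ) else 0)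
      = Pi.single k 1 := by
    funext b
    simp only [Pi.single_apply, Sym2.congr_right]
  have hrowk : (fun b => if s(k,b) = s(i,k) then (1 : MvPolynomial (Sym2 (Fin N)) ℚ) else 0)
      = Pi.single i 1 := by
    funext b
    have hc : (s(k,b) = s(i,k)) ↔ b = i := by
      rw [show s(i,k) = s(k,i) from Sym2.eq_swap, Sym2.congr_right]
    simp only [Pi.single_apply, hc]
  have hzero : ∀ a : Fin N, a ≠ i → a ≠ k →
      (S.updateRow a (fun b => pderiv s(i,k) (S a b))).det = 0 := by
    intro a hai hak
    apply Matrix.det_eq_zero_of_row_eq_zero a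
    intro b
    simp only [Matrix.updateRow_self, hS, pderiv_X, Pi.single_apply]
    rw [if_neg]
    rw [Sym2.eq_iff]
    rintro (⟨rfl, rfl⟩ | ⟨rfl, rfl⟩) <;> simp at hai hak
  rw [my_pderiv_det]
  by_cases h : i = k
  · subst h
    rw [Finset.sum_eq_single i (fun a _ ha => hzero a ha ha) (by simp)]
    rw [hrow, hrowi, ← Matrix.adjugate_apply, if_pos rfl]
    ring
  · have hsub : ∀ a ∈ Finset.univ, a ∉ ({i, k} : Finset (Fin N)) →
        (S.updateRow a (fun b => pderiv s(i,k) (S a b))).det = 0 := by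
      intro a _ ha
      simp only [Finset.mem_insert, Finset.mem_singleton, not_or] at ha
      exact hzero a ha.1 ha.2
    rw [← Finset.sum_subset (Finset.subset_univ ({i, k} : Finset (Fin N))) hsub,
      Finset.sum_pair h, hrow i, hrow k, hrowi, hrowk, ← Matrix.adjugate_apply,
      ← Matrix.adjugate_apply, hadj, if_neg h]
    ring

end Helpers

/-- Laplace-expansion identity for the determinant of a generic
symmetric matrix. The variables `x_{i,j} = x_{j,i}` are indexed by unordered
pairs (`Sym2 (Fin N)`), `S` is the generic symmetric `N×N` matrix,
`P = det S`, and for all `i, j`: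
`Σ_k (1 + δ_{i,k}) · x_{j,k} · ∂P/∂x_{i,k} − 2 δ_{i,j} · P = 0`. -/
theorem laplace_expansion_symmetric_det (N : ℕ) (hN : 1 ≤ N)
    (S : Matrix (Fin N) (Fin N) (MvPolynomial (Sym2 (Fin N)) ℚ))
    (hS : ∀ a b : Fin N, S a b = X s(a, b))
    (P : MvPolynomial (Sym2 (Fin N)) ℚ) (hP : P = S.det)
    (i j : Fin N) :
    (∑ k : Fin N,
        ((1 : MvPolynomial (Sym2 (Fin N)) ℚ) + if i = k then 1 else 0) *
          X s(j, k) * pderiv s(i, k) P)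
      - 2 * (if i = j then 1 else 0) * P = 0 := by
  subst hP
  have h1 : ∀ k : Fin N,
      ((1 : MvPolynomial (Sym2 (Fin N)) ℚ) + if i = k then 1 else 0) *
          X s(j, k) * pderiv s(i, k) S.det
        = 2 * (S j k * S.adjugate k i) := by
    intro k
    rw [my_key S hS i k, ← hS j k]
    by_cases h : i = k <;> simp only [h, if_true, if_false, eq_self_iff_true] <;> ring
  rw [Finset.sum_congr rfl fun k _ => h1 k, ← Finset.mul_sum,
    show ∑ k, S j k * S.adjugate k i = (S * S.adjugate) j i from (Matrix.mul_apply).symm,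
    Matrix.mul_adjugate, Matrix.smul_apply, Matrix.one_apply, smul_eq_mul]
  by_cases h : i = j
  · subst h; simp
  · rw [if_neg h, if_neg fun hh => h hh.symm]
    ring
end

section
/- Let F be a field, let A = F[z₁,…,z_m], let P ∈ A, and let k ≤ m. Suppose a₁,…,a_m, b ∈ A satisfy the syzygy equation Σ_{i=1}^{m} a_i · (∂P/∂z_i) + b · P = 0, and suppose that for each i ≤ k there exists b_i ∈ A with a_i = b_i · z_i. Let Q = z₁ z₂ ⋯ z_k. Then Σ_{i=1}^{m} a_i · ∂(Q·P)/∂z_i = Q · P · ((Σ_{i=1}^{k} b_i) − b); in particular the vector (a₁,…,a_m) is a polynomial tangent vector of the hypersurface Q·P = 0, i.e., Σ_{i=1}^{m} a_i · ∂(Q·P)/∂z_i is divisible by Q·P in A. -/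
open MvPolynomial

private lemma pderiv_prod_X_not_mem {F : Type*} [Field F] {m : ℕ}
    (s : Finset (Fin m)) (i : Fin m) (hi : i ∉ s) :
    pderiv i (∏ j ∈ s, (X j : MvPolynomial (Fin m) F)) = 0 := by
  induction s using Finset.induction with
  | empty => simp
  | insert _ _ h ih =>
    rw [Finset.prod_insert h, pderiv_mul, ih (fun hm => hi (Finset.mem_insert_of_mem hm)),
      pderiv_X_of_ne (by rintro rfl; exact hi (Finset.mem_insert_self _ _))]
    ring

private lemma pderiv_prod_X_mem {F : Type*} [Field F] {m : ℕ}
    (s : Finset (Fin m)) (i : Fin m) (hi : i ∈ s) :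
    pderiv i (∏ j ∈ s, (X j : MvPolynomial (Fin m) F)) = ∏ j ∈ s.erase i, X j := by
  rw [← Finset.prod_erase_mul s _ hi, pderiv_mul,
    pderiv_prod_X_not_mem _ i (Finset.notMem_erase i s), pderiv_X_self]
  ring

/-- if `(a₁,…,a_m, b)` satisfy the syzygy equation
`Σ aᵢ ∂P/∂zᵢ + b P = 0` and `aᵢ = bᵢ zᵢ` for `i ≤ k`, then with
`Q = z₁⋯z_k` we have `Σ aᵢ ∂(QP)/∂zᵢ = QP·((Σ_{i≤k} bᵢ) − b)`;
in particular `(a₁,…,a_m)` is a polynomial tangent vector of the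
hypersurface `QP = 0`, i.e. `QP` divides `Σ aᵢ ∂(QP)/∂zᵢ`. -/
theorem tangent_vector_of_reducible_hypersurface
    (F : Type*) [Field F] (m k : ℕ) (hk : k ≤ m)
    (P b : MvPolynomial (Fin m) F)
    (a bv : Fin m → MvPolynomial (Fin m) F)
    (hsyz : (∑ i, a i * pderiv i P) + b * P = 0)
    (hdiv : ∀ i : Fin m, (i : ℕ) < k → a i = bv i * X i)
    (Q : MvPolynomial (Fin m) F)
    (hQ : Q = ∏ i ∈ Finset.univ.filter (fun i : Fin m => (i : ℕ) < k), X i) :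
    (∑ i, a i * pderiv i (Q * P))
        = Q * P * ((∑ i ∈ Finset.univ.filter (fun i : Fin m => (i : ℕ) < k), bv i) - b)
      ∧ Q * P ∣ ∑ i, a i * pderiv i (Q * P) := by
  set s := Finset.univ.filter (fun i : Fin m => (i : ℕ) < k) with hs
  have key : ∀ i : Fin m, a i * pderiv i Q = (if i ∈ s then bv i * Q else 0) := by
    intro i
    by_cases hi : i ∈ s
    · have hik : (i : ℕ) < k := (Finset.mem_filter.mp hi).2
      rw [if_pos hi, hQ, pderiv_prod_X_mem _ i hi, hdiv i hik,
        ← Finset.prod_erase_mul s _ hi]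
      ring
    · rw [if_neg hi, hQ, pderiv_prod_X_not_mem _ i hi, mul_zero]
  have main : (∑ i, a i * pderiv i (Q * P)) = Q * P * ((∑ i ∈ s, bv i) - b) := by
    have : ∀ i : Fin m, a i * pderiv i (Q * P)
        = a i * pderiv i Q * P + Q * (a i * pderiv i P) := by
      intro i; rw [pderiv_mul]; ring
    rw [Finset.sum_congr rfl (fun i _ => this i), Finset.sum_add_distrib,
      ← Finset.mul_sum]
    have h1 : (∑ i, a i * pderiv i Q * P) = (∑ i ∈ s, bv i) * Q * P := by
      rw [← Finset.sum_mul, Finset.sum_congr rfl (fun i _ => by rw [key i]),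
        Finset.sum_ite_mem, Finset.univ_inter, ← Finset.sum_mul]
    have h2 : (∑ i, a i * pderiv i P) = -(b * P) := by linear_combination hsyz
    rw [h1, h2]; ring
  exact ⟨main, main ▸ Dvd.intro _ rfl⟩
end

section
/- Let F be a field, let A = F[z₁,…,z_m], and let C ⊆ {1,…,m} be a set of cut indices. Let ev : A → A be the F-algebra homomorphism that substitutes z_ζ ↦ 0 for every ζ ∈ C and fixes all other variables. Suppose P ∈ A and a₁,…,a_m, b ∈ A satisfy Σ_{i=1}^{m} a_i · (∂P/∂z_i) + b · P = 0, and suppose that z_ζ divides a_ζ for every ζ ∈ C. Set P̃ = ev(P). Then the substituted data satisfy the cut syzygy equation: Σ_{i ∉ C} ev(a_i) · (∂P̃/∂z_i) + ev(b) · P̃ = 0. -/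
open MvPolynomial

lemma pderiv_cut_comm {F : Type*} [Field F] {m : ℕ} (cutS : Finset (Fin m))
    (i : Fin m) (hi : i ∉ cutS) (p : MvPolynomial (Fin m) F) :
    pderiv i (aeval (fun j : Fin m => if j ∈ cutS then (0 : MvPolynomial (Fin m) F) else X j) p) =
      aeval (fun j : Fin m => if j ∈ cutS then 0 else X j) (pderiv i p) := by
  induction p using MvPolynomial.induction_on with
  | C c => simp
  | add p q hp hq => simp only [map_add, hp, hq]
  | mul_X p j hp =>
      rw [map_mul, pderiv_mul, pderiv_mul, map_add, map_mul, map_mul, hp, aeval_X]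
      by_cases hj : j ∈ cutS
      · have hij : j ≠ i := fun h => hi (h ▸ hj)
        simp [hj, pderiv_X_of_ne hij]
      · by_cases hij : j = i
        · subst hij; simp [hj]
        · simp [hj, pderiv_X_of_ne hij]

/-- applying a unitarity cut to a syzygy. If
`Σ aᵢ ∂P/∂zᵢ + b P = 0` and `z_ζ ∣ a_ζ` for every cut index `ζ ∈ C`, then,
with `ev` the evaluation homomorphism `z_ζ ↦ 0` (`ζ ∈ C`), `z_i ↦ z_i`
otherwise, and `P̃ = ev P`, the cut syzygy equation holds:
`Σ_{i ∉ C} ev(aᵢ) ∂P̃/∂zᵢ + ev(b) P̃ = 0`. -/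
theorem syzygy_on_cut
    (F : Type*) [Field F] (m : ℕ) (cutS : Finset (Fin m))
    (ev : MvPolynomial (Fin m) F →ₐ[F] MvPolynomial (Fin m) F)
    (hev : ev = aeval fun i : Fin m => if i ∈ cutS then 0 else X i)
    (P b : MvPolynomial (Fin m) F)
    (a : Fin m → MvPolynomial (Fin m) F)
    (hsyz : (∑ i, a i * pderiv i P) + b * P = 0)
    (hdiv : ∀ ζ ∈ cutS, X ζ ∣ a ζ) :
    (∑ i ∈ cutSᶜ, ev (a i) * pderiv i (ev P)) + ev b * ev P = 0 := by
  have key := congrArg ev hsyz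
  rw [map_zero, map_add, map_mul, map_sum] at key
  have hsplit : (∑ i, ev (a i * pderiv i P)) =
      ∑ i ∈ cutSᶜ, ev (a i * pderiv i P) := by
    rw [← Finset.sum_add_sum_compl cutS]
    have hzero : ∀ ζ ∈ cutS, ev (a ζ * pderiv ζ P) = 0 := by
      intro ζ hζ
      obtain ⟨c, hc⟩ := hdiv ζ hζ
      rw [map_mul, hc, map_mul, hev, aeval_X, if_pos hζ]
      ring
    rw [Finset.sum_eq_zero hzero, zero_add]
  rw [hsplit] at key
  rw [← key]
  congr 1
  apply Finset.sum_congr rfl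
  intro i hi
  rw [map_mul, hev, pderiv_cut_comm cutS i (Finset.mem_compl.mp hi)]
end
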